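/- Let n ≥ r > 1 and let A₁, …, A_m be positive semidefinite Hermitian n×n matrices forming a generalized phase retrievable frame (i.e. x x* is determined by the values ⟨x x*, A_j⟩_ℝ). Define the α analysis map by α_j(x) = ⟨x x*, A_j⟩_ℝ^{1/2} and θ(x) = (x x*)^{1/2}. Then the optimal squared global lower Lipschitz constant A₀ := inf { Σ_{j=1}^m (α_j(x) − α_j(y))² / ‖θ(x) − θ(y)‖₂² : x, y ∈ ℂ^{n×r}, θ(x) ≠ θ(y) } equals 0. -/

import Mathlib

open Matrix Filter
open scoped ComplexOrder

noncomputable def frob {p q : ℕ} (x : Matrix (Fin p) (Fin q) ℂ) : ℝ :=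
  Real.sqrt (Matrix.trace (xᴴ * x)).re

noncomputable def rinner {p q : ℕ} (X Y : Matrix (Fin p) (Fin q) ℂ) : ℝ :=
  (Matrix.trace (Xᴴ * Y)).re

noncomputable def nuclear {p q : ℕ} (x : Matrix (Fin p) (Fin q) ℂ) : ℝ :=
  (Matrix.trace ((((Matrix.posSemidef_conjTranspose_mul_self x).1.eigenvectorUnitary : Matrix _ _ ℂ) *
    diagonal ((fun t : ℝ => (t : ℂ)) ∘ Real.sqrt ∘ (Matrix.posSemidef_conjTranspose_mul_self x).1.eigenvalues) *
    (star ((Matrix.posSemidef_conjTranspose_mul_self x).1.eigenvectorUnitary : Matrix _ _ ℂ))))).re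

noncomputable def theta {n r : ℕ} (x : Matrix (Fin n) (Fin r) ℂ) : Matrix (Fin n) (Fin n) ℂ :=
  ((((Matrix.posSemidef_self_mul_conjTranspose x).1.eigenvectorUnitary : Matrix _ _ ℂ) *
    diagonal ((fun t : ℝ => (t : ℂ)) ∘ Real.sqrt ∘ (Matrix.posSemidef_self_mul_conjTranspose x).1.eigenvalues) *
    (star ((Matrix.posSemidef_self_mul_conjTranspose x).1.eigenvectorUnitary : Matrix _ _ ℂ))))

noncomputable def psi {n r : ℕ} (x : Matrix (Fin n) (Fin r) ℂ) : Matrix (Fin n) (Fin n) ℂ :=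
  frob x • theta x

noncomputable def Dmet {n r : ℕ} (x y : Matrix (Fin n) (Fin r) ℂ) : ℝ :=
  ⨅ U : Matrix.unitaryGroup (Fin r) ℂ, frob (x - y * (U : Matrix (Fin r) (Fin r) ℂ))

noncomputable def dmet {n r : ℕ} (x y : Matrix (Fin n) (Fin r) ℂ) : ℝ :=
  ⨅ U : Matrix.unitaryGroup (Fin r) ℂ,
    frob (x - y * (U : Matrix (Fin r) (Fin r) ℂ)) * frob (x + y * (U : Matrix (Fin r) (Fin r) ℂ))

/-! ### Auxiliary lemmas -/

lemma sum_ite_two {α M : Type*} [Fintype α] [DecidableEq α] [AddCommMonoid M] {z o : α}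
    (h : z ≠ o) (a b : M) :
    (∑ k, (if k = z then a else if k = o then b else 0)) = a + b := by
  rw [Finset.sum_congr rfl (fun k _ => show _ =
      (if k = z then a else 0) + (if k = o then b else 0) by
    split_ifs with h1 h2 <;> simp_all)]
  rw [Finset.sum_add_distrib, Finset.sum_ite_eq' Finset.univ, Finset.sum_ite_eq' Finset.univ]
  simp

noncomputable def pmat {n : ℕ} (u : Fin n → ℂ) : Matrix (Fin n) (Fin n) ℂ :=
  Matrix.vecMulVec u (star u)

lemma pmat_herm {n : ℕ} (u : Fin n → ℂ) : (pmat u)ᴴ = pmat u := by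
  ext i k
  simp only [pmat, Matrix.conjTranspose_apply, Matrix.vecMulVec_apply, Pi.star_apply, star_mul',
    star_star]
  ring

lemma vmv_mul {n : ℕ} (u a b c : Fin n → ℂ) :
    Matrix.vecMulVec u a * Matrix.vecMulVec b c = (a ⬝ᵥ b) • Matrix.vecMulVec u c := by
  ext i k
  simp only [Matrix.mul_apply, Matrix.vecMulVec_apply, Matrix.smul_apply, dotProduct,
    smul_eq_mul, Finset.sum_mul]
  apply Finset.sum_congr rfl
  intros; ring

lemma pmat_mul {n : ℕ} (u v : Fin n → ℂ) :
    pmat u * pmat v = (star u ⬝ᵥ v) • Matrix.vecMulVec u (star v) := vmv_mul u (star u) v (star v)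

lemma trace_vmv_mul {n : ℕ} (u w : Fin n → ℂ) (A : Matrix (Fin n) (Fin n) ℂ) :
    Matrix.trace (Matrix.vecMulVec u w * A) = w ⬝ᵥ (A *ᵥ u) := by
  simp only [Matrix.trace, Matrix.diag, Matrix.mul_apply, Matrix.vecMulVec_apply, dotProduct,
    Matrix.mulVec, Finset.mul_sum]
  rw [Finset.sum_comm]
  apply Finset.sum_congr rfl
  intros k _
  apply Finset.sum_congr rfl
  intros; ring

noncomputable def xmat {n r : ℕ} (u v : Fin n → ℂ) (z o : Fin r) (t : ℝ) :
    Matrix (Fin n) (Fin r) ℂ :=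
  Matrix.of fun i l => if l = z then u i else if l = o then (t : ℂ) * v i else 0

lemma xmat_mul_conjTranspose {n r : ℕ} (u v : Fin n → ℂ) {z o : Fin r} (hzo : z ≠ o) (t : ℝ) :
    xmat u v z o t * (xmat u v z o t)ᴴ = pmat u + (((t : ℂ)) ^ 2) • pmat v := by
  ext i k
  simp only [Matrix.mul_apply, Matrix.conjTranspose_apply, xmat, Matrix.of_apply,
    Matrix.add_apply, Matrix.smul_apply, pmat, Matrix.vecMulVec_apply, Pi.star_apply,
    smul_eq_mul]
  rw [Finset.sum_congr rfl (fun l _ => show _ =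
      (if l = z then u i * star (u k) else if l = o then (t:ℂ)^2 * (v i * star (v k)) else 0) by
    split_ifs with h1 h2 <;>
      simp_all [Complex.star_def, Complex.conj_ofReal] <;> ring)]
  rw [sum_ite_two hzo]

lemma pq_sq {n : ℕ} (u v : Fin n → ℂ) (hu : star u ⬝ᵥ u = 1) (hv : star v ⬝ᵥ v = 1)
    (huv : star u ⬝ᵥ v = 0) (hvu : star v ⬝ᵥ u = 0) (c : ℂ) :
    (pmat u + c • pmat v) ^ 2 = pmat u + (c ^ 2) • pmat v := by
  have hPP : pmat u * pmat u = pmat u := by rw [pmat_mul, hu, one_smul]; rfl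
  have hQQ : pmat v * pmat v = pmat v := by rw [pmat_mul, hv, one_smul]; rfl
  have hPQ : pmat u * pmat v = 0 := by rw [pmat_mul, huv, zero_smul]
  have hQP : pmat v * pmat u = 0 := by rw [pmat_mul, hvu, zero_smul]
  rw [sq]
  rw [Matrix.add_mul, Matrix.mul_add, Matrix.mul_add, Matrix.mul_smul, Matrix.mul_smul,
    Matrix.smul_mul, Matrix.smul_mul, hPP, hQQ, hPQ, hQP]
  simp [smul_smul, sq]

open scoped MatrixOrder in
lemma theta_eq_of_sq {n r : ℕ} (x : Matrix (Fin n) (Fin r) ℂ) (P : Matrix (Fin n) (Fin n) ℂ)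
    (hP : P.PosSemidef) (h : P * P = x * xᴴ) : theta x = P := by
  have hH := Matrix.posSemidef_self_mul_conjTranspose x
  have e1 : theta x = cfc Real.sqrt (x * xᴴ) := by
    rw [hH.1.cfc_eq, Matrix.IsHermitian.cfc, Unitary.conjStarAlgAut_apply]; rfl
  rw [e1, ← cfcₙ_eq_cfc, ← CFC.sqrt_eq_real_sqrt _ hH.nonneg]
  exact CFC.sqrt_unique h hP.nonneg

lemma theta_xmat {n r : ℕ} (u v : Fin n → ℂ) {z o : Fin r} (hzo : z ≠ o)
    (hu : star u ⬝ᵥ u = 1) (hv : star v ⬝ᵥ v = 1)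
    (huv : star u ⬝ᵥ v = 0) (hvu : star v ⬝ᵥ u = 0) {t : ℝ} (ht : 0 ≤ t) :
    theta (xmat u v z o t) = pmat u + (t : ℂ) • pmat v := by
  have hcast : ((Real.sqrt t : ℂ)) ^ 2 = (t : ℂ) := by
    rw [← Complex.ofReal_pow, Real.sq_sqrt ht]
  have hpsd : (pmat u + (t : ℂ) • pmat v).PosSemidef := by
    rw [← hcast, ← xmat_mul_conjTranspose u v hzo (Real.sqrt t)]
    exact Matrix.posSemidef_self_mul_conjTranspose _
  have hsq : (pmat u + (t : ℂ) • pmat v) ^ 2 = xmat u v z o t * (xmat u v z o t)ᴴ := by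
    rw [pq_sq u v hu hv huv hvu, xmat_mul_conjTranspose u v hzo t]
  exact theta_eq_of_sq _ _ hpsd (by rw [← sq]; exact hsq)

lemma trace_pmat {n : ℕ} (v : Fin n → ℂ) (hv : star v ⬝ᵥ v = 1) :
    Matrix.trace (pmat v) = 1 := by
  rw [show Matrix.trace (pmat v) = star v ⬝ᵥ v by
    simp [pmat, Matrix.trace, Matrix.diag, Matrix.vecMulVec_apply, dotProduct, mul_comm], hv]

lemma frob_smul_pmat {n : ℕ} (v : Fin n → ℂ) (hv : star v ⬝ᵥ v = 1) {t : ℝ} (ht : 0 ≤ t) :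
    frob ((t : ℂ) • pmat v) = t := by
  have hQQ : pmat v * pmat v = pmat v := by rw [pmat_mul, hv, one_smul]; rfl
  rw [frob]
  rw [Matrix.conjTranspose_smul, Matrix.smul_mul, Matrix.mul_smul, pmat_herm, hQQ,
    smul_smul]
  rw [Matrix.trace_smul, trace_pmat v hv]
  simp only [Complex.star_def, Complex.conj_ofReal, smul_eq_mul, mul_one, ← Complex.ofReal_mul,
    Complex.ofReal_re]
  rw [Real.sqrt_mul_self ht]

lemma rinner_pq {n : ℕ} (u v : Fin n → ℂ) (B : Matrix (Fin n) (Fin n) ℂ) (t : ℝ) :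
    rinner (pmat u + ((t : ℂ) ^ 2) • pmat v) B
      = (star u ⬝ᵥ B *ᵥ u).re + t ^ 2 * (star v ⬝ᵥ B *ᵥ v).re := by
  rw [rinner, Matrix.conjTranspose_add, Matrix.conjTranspose_smul, pmat_herm, pmat_herm,
    Matrix.add_mul, Matrix.smul_mul, Matrix.trace_add, Matrix.trace_smul]
  rw [show (pmat u * B).trace = star u ⬝ᵥ B *ᵥ u from trace_vmv_mul u (star u) B,
    show (pmat v * B).trace = star v ⬝ᵥ B *ᵥ v from trace_vmv_mul v (star v) B]
  simp only [Complex.add_re, Complex.star_def, map_pow, Complex.conj_ofReal, smul_eq_mul,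
    ← Complex.ofReal_pow, Complex.re_ofReal_mul]

lemma sqrt_diff_sq_le {a c s : ℝ} (ha : 0 ≤ a) (hc : 0 ≤ c) (hs : 0 ≤ s)
    (hac : c ≠ 0 → 0 < a) :
    (Real.sqrt (a + s * c) - Real.sqrt a) ^ 2
      ≤ if c = 0 then 0 else s ^ 2 * c ^ 2 / (4 * a) := by
  by_cases hc0 : c = 0
  · simp [hc0]
  · have ha' : 0 < a := hac hc0
    rw [if_neg hc0]
    set x := Real.sqrt (a + s * c) with hx
    set y := Real.sqrt a with hy
    have hsc : 0 ≤ s * c := mul_nonneg hs hc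
    have hx2 : x ^ 2 = a + s * c := Real.sq_sqrt (by linarith)
    have hy2 : y ^ 2 = a := Real.sq_sqrt ha
    have hy0 : 0 < y := Real.sqrt_pos.mpr ha'
    have hxy : y ≤ x := Real.sqrt_le_sqrt (by linarith)
    have hprod : (x - y) * (x + y) = s * c := by nlinarith
    have h1 : (x - y) * (2 * y) ≤ s * c := by nlinarith
    have h2 : x - y ≤ s * c / (2 * y) := by
      rw [le_div_iff₀ (by linarith)]; linarith
    have h3 : (x - y) ^ 2 ≤ (s * c / (2 * y)) ^ 2 := by
      apply pow_le_pow_left₀ (by linarith) h2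
    calc (x - y) ^ 2 ≤ (s * c / (2 * y)) ^ 2 := h3
      _ = s ^ 2 * c ^ 2 / (4 * a) := by
          rw [div_pow]; rw [show (2 * y) ^ 2 = 4 * y ^ 2 by ring, hy2]; ring_nf

lemma dot_self_eq_normSq {n : ℕ} (w : Fin n → ℂ) :
    star w ⬝ᵥ w = ((∑ i, Complex.normSq (w i) : ℝ) : ℂ) := by
  push_cast
  simp only [dotProduct, Pi.star_apply, Complex.star_def]
  exact Finset.sum_congr rfl fun i _ => (Complex.normSq_eq_conj_mul_self (z := w i)).symm ▸ rfl

lemma exists_unit_scale {n : ℕ} {w : Fin n → ℂ} (hw : w ≠ 0) :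
    ∃ ρ : ℝ, 0 < ρ ∧ star ((ρ : ℂ) • w) ⬝ᵥ ((ρ : ℂ) • w) = 1 := by
  set σ := ∑ i, Complex.normSq (w i) with hσdef
  have hσpos : 0 < σ := by
    have h1 : ∀ i ∈ Finset.univ, (0:ℝ) ≤ Complex.normSq (w i) := fun i _ => Complex.normSq_nonneg _
    rcases Function.ne_iff.mp hw with ⟨i, hi⟩
    exact Finset.sum_pos' h1 ⟨i, Finset.mem_univ i, Complex.normSq_pos.mpr hi⟩
  refine ⟨(Real.sqrt σ)⁻¹, by positivity, ?_⟩
  rw [star_smul, smul_dotProduct, dotProduct_smul, dot_self_eq_normSq, ← hσdef]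
  rw [Complex.star_def, Complex.conj_ofReal]
  rw [smul_eq_mul, smul_eq_mul, ← Complex.ofReal_mul, ← Complex.ofReal_mul]
  rw [show (Real.sqrt σ)⁻¹ * ((Real.sqrt σ)⁻¹ * σ) = (Real.sqrt σ * Real.sqrt σ)⁻¹ * σ by
    rw [mul_inv]; ring, Real.mul_self_sqrt hσpos.le, inv_mul_cancel₀ hσpos.ne']
  norm_num

lemma exists_generic_unit {n m : ℕ} (hn : 2 ≤ n) (A : Fin m → Matrix (Fin n) (Fin n) ℂ)
    (hA : ∀ j, (A j).PosSemidef) :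
    ∃ u : Fin n → ℂ, star u ⬝ᵥ u = 1 ∧ ∀ j, A j ≠ 0 → star u ⬝ᵥ ((A j) *ᵥ u) ≠ 0 := by
  haveI : Nonempty (Fin n) := ⟨⟨0, by omega⟩⟩
  classical
  set s : Finset (Subspace ℂ (Fin n → ℂ)) :=
    insert ⊥ ((Finset.univ.filter (fun j => A j ≠ 0)).image
      (fun j => LinearMap.ker (Matrix.mulVecLin (A j)))) with hs
  have htop : ⊤ ∉ s := by
    rw [hs]
    simp only [Finset.mem_insert, Finset.mem_image, Finset.mem_filter, Finset.mem_univ, true_and]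
    rintro (h | ⟨j, hj, hker⟩)
    · exact absurd h.symm bot_ne_top
    · have : Matrix.mulVecLin (A j) = 0 := LinearMap.ker_eq_top.mp hker
      apply hj
      ext i k
      have h2 : A j *ᵥ Pi.single k 1 = 0 := by
        have := congrFun (congrArg DFunLike.coe this) (Pi.single k 1)
        simpa [Matrix.mulVecLin_apply] using this
      calc A j i k = (A j *ᵥ Pi.single k 1) i := by
            simp [Matrix.mulVec_single]
        _ = 0 := by rw [h2]; rfl
  have hne := Subspace.biUnion_ne_univ_of_top_notMem htop
  rw [Ne, Set.eq_univ_iff_forall] at hne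
  push_neg at hne
  obtain ⟨w, hw⟩ := hne
  simp only [Set.mem_iUnion, not_exists, SetLike.mem_coe] at hw
  have hw0 : w ≠ 0 := by
    intro h
    exact hw ⊥ (Finset.mem_insert_self _ _) (h ▸ Submodule.zero_mem ⊥)
  have hwk : ∀ j, A j ≠ 0 → (A j) *ᵥ w ≠ 0 := by
    intro j hj h0
    refine hw (LinearMap.ker (Matrix.mulVecLin (A j))) ?_ ?_
    · rw [hs]
      exact Finset.mem_insert_of_mem (Finset.mem_image_of_mem _ (by simp [hj]))
    · rw [LinearMap.mem_ker, Matrix.mulVecLin_apply]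
      exact h0
  obtain ⟨ρ, hρ, hunit⟩ := exists_unit_scale hw0
  refine ⟨(ρ : ℂ) • w, hunit, fun j hj => ?_⟩
  have hkey : star w ⬝ᵥ ((A j) *ᵥ w) ≠ 0 := by
    intro h
    exact hwk j hj (((hA j).dotProduct_mulVec_zero_iff w).mp h)
  rw [star_smul, smul_dotProduct, Matrix.mulVec_smul, dotProduct_smul]
  simp only [Complex.star_def, Complex.conj_ofReal, smul_eq_mul]
  intro h
  rcases mul_eq_zero.mp h with h | h
  · exact (Complex.ofReal_ne_zero.mpr hρ.ne') h
  · rcases mul_eq_zero.mp h with h | h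
    · exact (Complex.ofReal_ne_zero.mpr hρ.ne') h
    · exact hkey h

lemma exists_orth_unit {n : ℕ} (hn : 2 ≤ n) (u : Fin n → ℂ) (hu : star u ⬝ᵥ u = 1) :
    ∃ v : Fin n → ℂ, star v ⬝ᵥ v = 1 ∧ star u ⬝ᵥ v = 0 ∧ star v ⬝ᵥ u = 0 := by
  have hu0 : u ≠ 0 := by
    intro h
    rw [h] at hu
    simp [dotProduct] at hu
  obtain ⟨i0, hi0⟩ := Function.ne_iff.mp hu0
  obtain ⟨i1, hi1⟩ := Fintype.exists_ne_of_one_lt_card (by simp [Fintype.card_fin]; omega) i0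
  set w : Fin n → ℂ := fun k => if k = i0 then star (u i1) else if k = i1 then -star (u i0) else 0
    with hwdef
  have hw0 : w ≠ 0 := by
    intro h
    have : w i1 = 0 := congrFun h i1
    rw [hwdef] at this
    simp only [if_neg hi1, if_pos rfl] at this
    exact hi0 (by simpa using this)
  have horth : star u ⬝ᵥ w = 0 := by
    rw [dotProduct]
    rw [Finset.sum_congr rfl (fun k _ => show (star u) k * w k =
        (if k = i0 then star (u i0) * star (u i1) else
          if k = i1 then star (u i1) * (-star (u i0)) else 0) by
      rw [hwdef]
      split_ifs with h1 h2 <;> simp [h1] <;> simp [h2])]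
    rw [Finset.sum_congr rfl (fun k _ => show _ =
        (if k = i0 then star (u i0) * star (u i1) else 0) +
        (if k = i1 then star (u i1) * (-star (u i0)) else 0) by
      split_ifs with h1 h2 <;> simp_all)]
    rw [Finset.sum_add_distrib, Finset.sum_ite_eq' Finset.univ, Finset.sum_ite_eq' Finset.univ]
    simp [mul_comm]
  obtain ⟨ρ, hρ, hunit⟩ := exists_unit_scale hw0
  refine ⟨(ρ : ℂ) • w, hunit, ?_, ?_⟩
  · rw [dotProduct_smul, horth, smul_zero]
  · have : star ((ρ : ℂ) • w) ⬝ᵥ u = star (star u ⬝ᵥ ((ρ : ℂ) • w)) := by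
      simp only [dotProduct, star_sum, star_mul', star_star, Pi.star_apply]
      exact Finset.sum_congr rfl fun i _ => by ring
    rw [this, dotProduct_smul, horth, smul_zero, star_zero]

/-- for `n ≥ r > 1` and a generalized phase retrievable frame of positive
semidefinite matrices `A_j`, the squared global lower Lipschitz constant `A₀` of the `α`
analysis map `α_j(x) = ⟨x x*, A_j⟩_ℝ^{1/2}` relative to `‖θ(x) − θ(y)‖₂` equals `0`. -/
theorem alpha_lower_lipschitz_zero (n r m : ℕ) (hr : 1 < r) (hrn : r ≤ n)
    (A : Fin m → Matrix (Fin n) (Fin n) ℂ) (hA : ∀ j, (A j).PosSemidef)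
    (hpr : ∀ x y : Matrix (Fin n) (Fin r) ℂ,
      (∀ j, rinner (x * xᴴ) (A j) = rinner (y * yᴴ) (A j)) → x * xᴴ = y * yᴴ) :
    sInf {t : ℝ | ∃ x y : Matrix (Fin n) (Fin r) ℂ, theta x ≠ theta y ∧
      t = (∑ j, (Real.sqrt (rinner (x * xᴴ) (A j))
            - Real.sqrt (rinner (y * yᴴ) (A j))) ^ 2)
          / frob (theta x - theta y) ^ 2} = 0 := by
  have hn2 : 2 ≤ n := by omega
  obtain ⟨u, hu, hgen⟩ := exists_generic_unit hn2 A hA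
  obtain ⟨v, hv, huv, hvu⟩ := exists_orth_unit hn2 u hu
  set z : Fin r := ⟨0, by omega⟩ with hzdef
  set o : Fin r := ⟨1, hr⟩ with hodef
  have hzo : z ≠ o := by
    intro h
    have := congrArg Fin.val h
    simp [hzdef, hodef] at this
  set S : Set ℝ := {t : ℝ | ∃ x y : Matrix (Fin n) (Fin r) ℂ, theta x ≠ theta y ∧
      t = (∑ j, (Real.sqrt (rinner (x * xᴴ) (A j))
            - Real.sqrt (rinner (y * yᴴ) (A j))) ^ 2)
          / frob (theta x - theta y) ^ 2} with hS
  show sInf S = 0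
  -- measurement data
  set ra : Fin m → ℝ := fun j => (star u ⬝ᵥ (A j) *ᵥ u).re with hradef
  set rc : Fin m → ℝ := fun j => (star v ⬝ᵥ (A j) *ᵥ v).re with hrcdef
  have hra0 : ∀ j, 0 ≤ ra j := by
    intro j
    have h := (hA j).dotProduct_mulVec_nonneg u
    rw [Complex.le_def] at h
    simpa using h.1
  have hrc0 : ∀ j, 0 ≤ rc j := by
    intro j
    have h := (hA j).dotProduct_mulVec_nonneg v
    rw [Complex.le_def] at h
    simpa using h.1
  have hrapos : ∀ j, rc j ≠ 0 → 0 < ra j := by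
    intro j hj
    have hAj : A j ≠ 0 := by
      intro h0
      apply hj
      rw [hrcdef]
      simp [h0]
    have hne0 := hgen j hAj
    have h := (hA j).dotProduct_mulVec_nonneg u
    rw [Complex.le_def] at h
    refine lt_of_le_of_ne (hra0 j) fun heq => ?_
    apply hne0
    apply Complex.ext
    · simpa [hradef] using heq.symm
    · simpa using h.2.symm
  set C : ℝ := ∑ j, (if rc j = 0 then 0 else (rc j) ^ 2 / (4 * ra j)) with hCdef
  have hC0 : 0 ≤ C := by
    apply Finset.sum_nonneg
    intro j _
    split_ifs with h
    · exact le_refl 0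
    · exact div_nonneg (sq_nonneg _) (by nlinarith [hrapos j h])
  -- key construction
  have key : ∀ t : ℝ, 0 < t → ∃ q ∈ S, q ≤ t ^ 2 * C := by
    intro t ht
    set x := xmat u v z o t with hxdef
    set y := xmat u v z o (0 : ℝ) with hydef
    have hthx : theta x = pmat u + (t : ℂ) • pmat v :=
      theta_xmat u v hzo hu hv huv hvu ht.le
    have hthy : theta y = pmat u := by
      rw [hydef, theta_xmat u v hzo hu hv huv hvu le_rfl]
      norm_num
    have hneq : theta x ≠ theta y := by
      rw [hthx, hthy]
      intro h
      have h' : (t : ℂ) • pmat v = 0 := by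
        have := add_eq_left.mp h
        exact this
      rcases smul_eq_zero.mp h' with h0 | h0
      · exact (Complex.ofReal_ne_zero.mpr ht.ne') h0
      · have htr := trace_pmat v hv
        rw [h0] at htr
        simp at htr
    refine ⟨_, ⟨x, y, hneq, rfl⟩, ?_⟩
    have hfrob : frob (theta x - theta y) = t := by
      rw [hthx, hthy, add_sub_cancel_left, frob_smul_pmat v hv ht.le]
    rw [hfrob]
    have hx2 : x * xᴴ = pmat u + ((t : ℂ) ^ 2) • pmat v := xmat_mul_conjTranspose u v hzo t
    have hy2 : y * yᴴ = pmat u + ((((0:ℝ)) : ℂ) ^ 2) • pmat v := xmat_mul_conjTranspose u v hzo 0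
    have hnum : (∑ j, (Real.sqrt (rinner (x * xᴴ) (A j))
            - Real.sqrt (rinner (y * yᴴ) (A j))) ^ 2) ≤ (t ^ 2) ^ 2 * C := by
      have hterm : ∀ j ∈ Finset.univ, (Real.sqrt (rinner (x * xᴴ) (A j))
            - Real.sqrt (rinner (y * yᴴ) (A j))) ^ 2
          ≤ (if rc j = 0 then 0 else (t ^ 2) ^ 2 * (rc j) ^ 2 / (4 * ra j)) := by
        intro j _
        rw [hx2, hy2, rinner_pq, rinner_pq]
        norm_num
        have := sqrt_diff_sq_le (a := ra j) (c := rc j) (s := t ^ 2)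
          (hra0 j) (hrc0 j) (sq_nonneg t) (hrapos j)
        simpa [hradef, hrcdef, mul_comm] using this
      calc (∑ j, (Real.sqrt (rinner (x * xᴴ) (A j))
            - Real.sqrt (rinner (y * yᴴ) (A j))) ^ 2)
          ≤ ∑ j, (if rc j = 0 then 0 else (t ^ 2) ^ 2 * (rc j) ^ 2 / (4 * ra j)) :=
            Finset.sum_le_sum hterm
        _ = (t ^ 2) ^ 2 * C := by
            rw [hCdef, Finset.mul_sum]
            apply Finset.sum_congr rfl
            intro j _
            split_ifs with h
            · simp
            · rw [mul_div_assoc]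
    rw [div_le_iff₀ (by positivity)]
    calc (∑ j, (Real.sqrt (rinner (x * xᴴ) (A j))
            - Real.sqrt (rinner (y * yᴴ) (A j))) ^ 2) ≤ (t ^ 2) ^ 2 * C := hnum
      _ = t ^ 2 * C * t ^ 2 := by ring
  -- conclude
  have hlb : ∀ q ∈ S, (0:ℝ) ≤ q := by
    rintro q ⟨x, y, hxy, rfl⟩
    exact div_nonneg (Finset.sum_nonneg fun j _ => sq_nonneg _) (sq_nonneg _)
  have hbdd : BddBelow S := ⟨0, fun q hq => hlb q hq⟩
  have hSne : S.Nonempty := by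
    obtain ⟨q, hq, -⟩ := key 1 one_pos
    exact ⟨q, hq⟩
  refine le_antisymm ?_ (le_csInf hSne hlb)
  by_contra hpos
  push_neg at hpos
  have hC1 : (0:ℝ) < C + 1 := by linarith
  set ε := sInf S with hε
  set t := Real.sqrt (ε / (2 * (C + 1))) with htdef
  have ht : 0 < t := Real.sqrt_pos.mpr (by positivity)
  obtain ⟨q, hq, hqle⟩ := key t ht
  have ht2 : t ^ 2 = ε / (2 * (C + 1)) := Real.sq_sqrt (by positivity)
  have hlt : q < ε := by
    refine lt_of_le_of_lt hqle ?_
    rw [ht2, div_mul_eq_mul_div, div_lt_iff₀ (by positivity)]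
    nlinarith
  exact absurd (csInf_le hbdd hq) (not_le.mpr hlt)
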